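/- For every ab-monomial w of length at least 1 (hence, by linearity, for every homogeneous ab-polynomial w of positive degree), φ_ub(a·w) = ω(a·r(w))·(a − b). -/

import Mathlib

open scoped TensorProduct

noncomputable section

namespace CD


/-- ab-words: `false` represents the letter `a`, `true` represents the letter `b`. -/
abbrev Word := List Bool

/-- The free associative ℤ-algebra ℤ⟨a,b⟩ on two noncommuting variables. -/
abbrev ZAB := MonoidAlgebra ℤ (FreeMonoid Bool)

/-- The ab-monomial associated to a word. -/
def mon (w : Word) : ZAB := MonoidAlgebra.single (FreeMonoid.ofList w) 1

/-- The variable `a`. -/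
def genA : ZAB := mon [false]
/-- The variable `b`. -/
def genB : ZAB := mon [true]
/-- `c = a + b`. -/
def genC : ZAB := genA + genB
/-- `d = ab + ba`. -/
def genD : ZAB := genA * genB + genB * genA
/-- `a - b`. -/
def amb : ZAB := genA - genB

/-- Extend a function defined on ab-monomials to a ℤ-linear map on ℤ⟨a,b⟩. -/
def lin (f : Word → ZAB) : ZAB →ₗ[ℤ] ZAB :=
  Finsupp.lift ZAB ℤ (FreeMonoid Bool) (fun w => f (FreeMonoid.toList w))
    ∘ₗ (MonoidAlgebra.coeffLinearEquiv ℤ).toLinearMap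

/-- κ : κ(aᵐ) = (a-b)ᵐ, and 0 on all other ab-monomials. -/
def kappaW (w : Word) : ZAB :=
  if ∀ x ∈ w, x = false then amb ^ w.length else 0

/-- β : β(bᵐ) = (a-b)ᵐ, and 0 on all other ab-monomials. -/
def betaW (w : Word) : ZAB :=
  if ∀ x ∈ w, x = true then amb ^ w.length else 0

/-- η : η(bᵐaᵏ) = 2·(a-b)^{m+k}, and 0 on all other ab-monomials. -/
def etaW (w : Word) : ZAB :=
  if List.IsChain (· ≥ ·) w then (2 : ℤ) • amb ^ w.length else 0

/-- λ_t : λ_t(bᵐ) = (a-b)ᵐ, λ_t(bᵐa) = (a-b)^{m+1}, and 0 on all other ab-monomials. -/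
def lamTW (w : Word) : ZAB :=
  if List.IsChain (· ≥ ·) w ∧ w.count false ≤ 1 then amb ^ w.length else 0

/-- λ_ub = η - 2·β. -/
def lamUbW (w : Word) : ZAB := etaW w - (2 : ℤ) • betaW w

/-- ω : first replace each occurrence of ab by 2d, then each remaining letter by c. -/
def omegaW : Word → ZAB
  | [] => 1
  | false :: true :: w => ((2 : ℤ) • genD) * omegaW w
  | _ :: w => genC * omegaW w

/-- H′ : removes the last letter of an ab-monomial (`H′(1) = 0`). -/
def HpW (w : Word) : ZAB := if w = [] then 0 else mon w.dropLast

/-- r : r(1) = 0, r(v·a) = v, r(v·b) = 0. -/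
def rW (w : Word) : ZAB := if w.getLast? = some false then mon w.dropLast else 0

/-- The reversal involution on ab-monomials. -/
def revW (w : Word) : ZAB := mon w.reverse

/-- `conv F G (w) = Σ_w F(w₍₁₎)·b·G(w₍₂₎)`, the sum over the coproduct of the word `w`,
i.e. over all ways of removing one letter from `w`, splitting it in two pieces. -/
def conv (F G : Word → ZAB) (w : Word) : ZAB :=
  ∑ i ∈ Finset.range w.length, F (w.take i) * genB * G (w.drop (i + 1))

/-- `tailChain lam j (w) = Σ_w η(w₍₁₎)·b·η(w₍₂₎)·b ⋯ b·η(w₍ⱼ₎)·b·lam(w₍ⱼ₊₁₎)`: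
a chain of `j` η's followed by the map `lam`, summed over the iterated coproduct. -/
def tailChain (lam : Word → ZAB) : ℕ → Word → ZAB
  | 0 => lam
  | j + 1 => conv etaW (tailChain lam j)

/-- φ_k : φ_1 = κ and, for k ≥ 2, `φ_k(v) = Σ_v κ(v₍₁₎)·b·η(v₍₂₎)·b ⋯ b·η(v₍ₖ₎)`,
the sum over the iterated coproduct Δ^{k-1}. -/
def phiK : ℕ → Word → ZAB
  | 0 => fun _ => 0
  | 1 => kappaW
  | k + 2 => conv kappaW (tailChain etaW k)

/-- φ_{t,k} : φ_{t,1} = κ and, for k ≥ 2,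
`φ_{t,k}(v) = Σ_v κ(v₍₁₎)·b·η(v₍₂₎)·b ⋯ b·η(v₍ₖ₋₁₎)·b·λ_t(v₍ₖ₎)`. -/
def phiTK : ℕ → Word → ZAB
  | 0 => fun _ => 0
  | 1 => kappaW
  | k + 2 => conv kappaW (tailChain lamTW k)

/-- φ_{ub,k} : φ_{ub,1} = κ and, for k ≥ 2,
`φ_{ub,k}(v) = Σ_v κ(v₍₁₎)·b·η(v₍₂₎)·b ⋯ b·η(v₍ₖ₋₁₎)·b·λ_ub(v₍ₖ₎)`. -/
def phiUbK : ℕ → Word → ZAB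
  | 0 => fun _ => 0
  | 1 => kappaW
  | k + 2 => conv kappaW (tailChain lamUbW k)

/-- φ = Σ_{k ≥ 1} φ_k (on a word of length ℓ, only terms with k ≤ ℓ + 1 are nonzero). -/
def phiW (w : Word) : ZAB := ∑ k ∈ Finset.range (w.length + 2), phiK k w

/-- φ_t = Σ_{k ≥ 1} φ_{t,k}. -/
def phiTW (w : Word) : ZAB := ∑ k ∈ Finset.range (w.length + 2), phiTK k w

/-- φ_ub = Σ_{k ≥ 1} φ_{ub,k}. -/
def phiUbW (w : Word) : ZAB := ∑ k ∈ Finset.range (w.length + 2), phiUbK k w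

/-- The coproduct Δ on ℤ⟨a,b⟩: Δ(u₁u₂⋯uₙ) = Σᵢ u₁⋯u_{i-1} ⊗ u_{i+1}⋯uₙ. -/
def Delta : ZAB →ₗ[ℤ] (ZAB ⊗[ℤ] ZAB) :=
  Finsupp.lift (ZAB ⊗[ℤ] ZAB) ℤ (FreeMonoid Bool)
    (fun w => ∑ i ∈ Finset.range (FreeMonoid.toList w).length,
      mon ((FreeMonoid.toList w).take i) ⊗ₜ[ℤ] mon ((FreeMonoid.toList w).drop (i + 1)))
    ∘ₗ (MonoidAlgebra.coeffLinearEquiv ℤ).toLinearMap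

/-- For linear maps F, G, the linear map `u ⊗ w ↦ F(u)·b·G(w)`; applying it to Δ(v)
gives the Sweedler sum `Σ_v F(v₍₁₎)·b·G(v₍₂₎)`. -/
def sandwich (F G : ZAB →ₗ[ℤ] ZAB) : (ZAB ⊗[ℤ] ZAB) →ₗ[ℤ] ZAB :=
  TensorProduct.lift
    (((LinearMap.mul ℤ ZAB).comp ((LinearMap.mulRight ℤ genB).comp F)).compl₂ G)




/-! ### Auxiliary material for the proof -/

/-- χ : χ(v) = (a-b)^{|v|} if v is of the form bᵐaᵏ, and 0 otherwise. -/
def chiW (w : Word) : ZAB := if List.IsChain (· ≥ ·) w then amb ^ w.length else 0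

/-- tW : tW(v·a) = 2·ω(v)·(a-b), and 0 on other words. -/
def tW (w : Word) : ZAB :=
  if w.getLast? = some false then (2 : ℤ) • (omegaW w.dropLast * amb) else 0

lemma bool_le_false {y : Bool} : y ≤ false ↔ y = false := by cases y <;> simp
lemma bool_true_le {y : Bool} : true ≤ y ↔ y = true := by cases y <;> simp

lemma chain'_cons_true (t : Word) :
    List.IsChain (· ≥ ·) (true :: t) ↔ List.IsChain (· ≥ ·) t := by
  rw [List.isChain_cons]
  simp [Bool.le_true]

lemma chain'_cons_false : ∀ t : Word,
    List.IsChain (· ≥ ·) (false :: t) ↔ ∀ x ∈ t, x = false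
  | [] => by simp
  | y :: t => by
    rw [List.isChain_cons_cons]
    cases y
    · simp [chain'_cons_false t, ge_iff_le]
    · simp [ge_iff_le]

lemma chain'_concat_false (t : Word) :
    List.IsChain (· ≥ ·) (t ++ [false]) ↔ List.IsChain (· ≥ ·) t := by
  rw [List.isChain_append]
  simp [ge_iff_le]

lemma chain'_concat_true : ∀ t : Word,
    List.IsChain (· ≥ ·) (t ++ [true]) ↔ ∀ x ∈ t, x = true
  | [] => by simp
  | y :: t => by
    rw [List.cons_append, List.isChain_cons]
    rw [chain'_concat_true t]
    constructor
    · rintro ⟨h1, h2⟩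
      intro x hx
      rcases List.mem_cons.mp hx with rfl | hx
      · cases t with
        | nil => simpa [bool_true_le] using h1 true (by simp)
        | cons z t' =>
          have hz : z = true := h2 z (by simp)
          have := h1 z (by simp)
          subst hz
          simpa [bool_true_le] using this
      · exact h2 x hx
    · intro h
      have hy : y = true := h y (by simp)
      subst hy
      refine ⟨?_, fun x hx => h x (by simp [hx])⟩
      intro z hz
      simp [Bool.le_true]

/-- appending a letter to the left: the three easy `omegaW` equations. -/
lemma omegaW_nil : omegaW [] = 1 := rfl
lemma omegaW_cons_true (u : Word) : omegaW (true :: u) = genC * omegaW u := rfl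
lemma omegaW_ab (u : Word) : omegaW (false :: true :: u) = ((2 : ℤ) • genD) * omegaW u := rfl
lemma omegaW_aa (u : Word) : omegaW (false :: false :: u) = genC * omegaW (false :: u) := rfl
lemma omegaW_a : omegaW [false] = genC := by
  show genC * omegaW [] = genC
  rw [omegaW_nil, mul_one]

lemma genC_eq : genC = (2 : ℤ) • genB + amb := by
  simp [genC, amb, two_smul]; abel

lemma etaW_nil : etaW [] = (2 : ℤ) • 1 := by simp [etaW]

lemma chiW_cons_true (t : Word) : chiW (true :: t) = amb * chiW t := by
  simp only [chiW, chain'_cons_true, List.length_cons]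
  split
  · rw [pow_succ']
  · rw [mul_zero]

lemma etaW_cons_true (t : Word) : etaW (true :: t) = amb * etaW t := by
  simp only [etaW, chain'_cons_true, List.length_cons]
  split
  · rw [pow_succ', mul_smul_comm]
  · rw [mul_zero]

lemma chain'_ff (t : Word) :
    List.IsChain (· ≥ ·) (false :: false :: t) ↔ List.IsChain (· ≥ ·) (false :: t) := by
  rw [chain'_cons_false, chain'_cons_false]
  simp

lemma chiW_ff (t : Word) : chiW (false :: false :: t) = amb * chiW (false :: t) := by
  simp only [chiW, chain'_ff, List.length_cons]
  split
  · rw [pow_succ']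
  · rw [mul_zero]

lemma etaW_cons_false_pre (t : Word) (h : t = [] ∨ ∃ t', t = false :: t') :
    etaW (false :: t) = amb * etaW t := by
  rcases h with rfl | ⟨t', rfl⟩
  · show etaW [false] = amb * etaW []
    rw [etaW_nil, mul_smul_comm, mul_one]
    simp [etaW]
  · simp only [etaW, chain'_ff, List.length_cons]
    split
    · rw [pow_succ', mul_smul_comm]
    · rw [mul_zero]

lemma take_cons_shape (x : Bool) (u : Word) (i : ℕ) :
    (x :: u).take i = [] ∨ ∃ t', (x :: u).take i = x :: t' := by
  cases i with
  | zero => exact Or.inl rfl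
  | succ n => exact Or.inr ⟨u.take n, rfl⟩

lemma eta_not_chain (u : Word) : etaW (false :: true :: u) = 0 := by
  rw [etaW, if_neg]
  rw [List.isChain_cons_cons]
  rintro ⟨h, -⟩
  simp [ge_iff_le, bool_le_false] at h

lemma chi_not_chain (u : Word) : chiW (false :: true :: u) = 0 := by
  rw [chiW, if_neg]
  rw [List.isChain_cons_cons]
  rintro ⟨h, -⟩
  simp [ge_iff_le, bool_le_false] at h

lemma conv_cons (F G : Word → ZAB) (x : Bool) (u : Word) :
    conv F G (x :: u) =
      F [] * genB * G u +
        ∑ i ∈ Finset.range u.length, F (x :: u.take i) * genB * G (u.drop (i + 1)) := by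
  rw [conv, List.length_cons, Finset.sum_range_succ']
  simp only [List.take_succ_cons, List.drop_succ_cons, List.take_zero, List.drop_one,
    List.drop_zero, List.tail_cons]
  rw [add_comm]

/-- The master identity (★): ω(v) = χ(v) + Σᵢ η(v₍₁₎)·b·ω(v₍₂₎). -/
lemma omega_eq : ∀ v : Word, omegaW v = chiW v + conv etaW omegaW v
  | [] => by simp [omegaW_nil, chiW, conv]
  | true :: u => by
    have IH := omega_eq u
    rw [conv_cons, omegaW_cons_true]
    have hsum : ∑ i ∈ Finset.range u.length,
        etaW (true :: u.take i) * genB * omegaW (u.drop (i + 1))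
        = amb * conv etaW omegaW u := by
      rw [conv, Finset.mul_sum]
      refine Finset.sum_congr rfl fun i hi => ?_
      rw [etaW_cons_true]
      simp only [mul_assoc]
    rw [hsum, chiW_cons_true, etaW_nil]
    have hconv : conv etaW omegaW u = omegaW u - chiW u := by rw [IH]; abel
    rw [hconv, genC_eq, two_smul, smul_mul_assoc, two_smul]
    noncomm_ring
  | [false] => by
    have h1 : chiW [false] = amb := by simp [chiW]
    have h2 : conv etaW omegaW [false] = (2 : ℤ) • genB := by
      rw [conv]
      simp [etaW_nil, omegaW_nil, smul_mul_assoc]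
    rw [omegaW_a, h1, h2, genC_eq]
    abel
  | false :: false :: u => by
    have IH := omega_eq (false :: u)
    rw [conv_cons, omegaW_aa]
    have hsum : ∑ i ∈ Finset.range (false :: u).length,
        etaW (false :: (false :: u).take i) * genB * omegaW ((false :: u).drop (i + 1))
        = amb * conv etaW omegaW (false :: u) := by
      rw [conv, Finset.mul_sum]
      refine Finset.sum_congr rfl fun i hi => ?_
      rw [etaW_cons_false_pre _ (take_cons_shape false u i)]
      simp only [mul_assoc]
    rw [hsum, chiW_ff, etaW_nil]
    have hconv : conv etaW omegaW (false :: u) = omegaW (false :: u) - chiW (false :: u) := by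
      rw [IH]; abel
    rw [hconv, genC_eq, two_smul, smul_mul_assoc, two_smul]
    noncomm_ring
  | false :: true :: u => by
    rw [omegaW_ab, conv]
    simp only [List.length_cons]
    rw [Finset.sum_range_succ', Finset.sum_range_succ']
    have h2 : ∀ i ∈ Finset.range u.length,
        etaW ((false :: true :: u).take (i + 1 + 1)) * genB *
          omegaW ((false :: true :: u).drop (i + 1 + 1 + 1)) = 0 := by
      intro i hi
      simp only [List.take_succ_cons, eta_not_chain, zero_mul]
    rw [Finset.sum_congr rfl h2]
    simp only [Finset.sum_const_zero, zero_add, List.take_succ_cons, List.take_zero,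
      List.drop_succ_cons, List.drop_zero, List.drop_one, List.tail_cons]
    rw [chi_not_chain, etaW_nil, omegaW_cons_true]
    have hea : etaW [false] = (2 : ℤ) • amb := by simp [etaW]
    rw [hea]
    simp only [genD, genC, amb, two_smul, smul_mul_assoc]
    noncomm_ring
  termination_by v => v.length

lemma betaW_nil : betaW [] = 1 := by simp [betaW]

lemma lamUbW_nil : lamUbW [] = 0 := by
  rw [lamUbW, etaW_nil, betaW_nil]
  simp [two_smul]

lemma lamUbW_concat_true (l : Word) : lamUbW (l ++ [true]) = 0 := by
  rw [lamUbW, etaW, betaW]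
  have h : (∀ x ∈ l ++ [true], x = true) ↔ ∀ x ∈ l, x = true := by simp
  have hc : List.IsChain (· ≥ ·) (l ++ [true]) ↔ ∀ x ∈ l, x = true := chain'_concat_true l
  by_cases hp : ∀ x ∈ l, x = true
  · rw [if_pos (hc.mpr hp), if_pos (h.mpr hp)]
    exact sub_self _
  · rw [if_neg (fun h' => hp (hc.mp h')), if_neg (fun h' => hp (h.mp h')), smul_zero, sub_zero]

lemma lamUbW_concat_false (l : Word) :
    lamUbW (l ++ [false]) = (2 : ℤ) • (chiW l * amb) := by
  have hb : ¬ (∀ x ∈ l ++ [false], x = true) := by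
    intro h
    simpa using h false (by simp)
  rw [lamUbW, etaW, betaW, if_neg hb, smul_zero, sub_zero, chiW]
  by_cases hp : List.IsChain (· ≥ ·) l
  · rw [if_pos ((chain'_concat_false l).mpr hp), if_pos hp, List.length_append,
      List.length_singleton, pow_succ]
  · rw [if_neg (fun h' => hp ((chain'_concat_false l).mp h')), if_neg hp, zero_mul, smul_zero]

lemma tW_nil : tW [] = 0 := by simp [tW]

lemma tW_concat_true (l : Word) : tW (l ++ [true]) = 0 := by
  simp [tW]

lemma tW_concat_false (l : Word) :
    tW (l ++ [false]) = (2 : ℤ) • (omegaW l * amb) := by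
  simp [tW]

lemma tailChain_eq_zero : ∀ (j : ℕ) (v : Word), v.length < j → tailChain lamUbW j v = 0
  | 0, v, h => absurd h (Nat.not_lt_zero _)
  | j + 1, v, h => by
    show conv etaW (tailChain lamUbW j) v = 0
    rw [conv]
    refine Finset.sum_eq_zero fun i hi => ?_
    have hi' : i < v.length := Finset.mem_range.mp hi
    rw [tailChain_eq_zero j (v.drop (i + 1)) (by simp only [List.length_drop]; omega),
      mul_zero]

/-- Exchanging the outer sum over chain length with the conv sum. -/
lemma sum_conv (F : Word → ZAB) (v : Word) :
    ∑ j ∈ Finset.range v.length, conv F (tailChain lamUbW j) v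
      = ∑ i ∈ Finset.range v.length, F (v.take i) * genB *
          ∑ j ∈ Finset.range ((v.drop (i + 1)).length + 1), tailChain lamUbW j (v.drop (i + 1)) := by
  simp only [conv]
  rw [Finset.sum_comm]
  refine Finset.sum_congr rfl fun i hi => ?_
  rw [Finset.mul_sum]
  have hi' : i < v.length := Finset.mem_range.mp hi
  refine (Finset.sum_subset ?_ ?_).symm
  · refine Finset.range_subset_range.mpr ?_
    simp only [List.length_drop]
    omega
  · intro j _ hj
    have hj' : (v.drop (i + 1)).length < j := by
      simp only [Finset.mem_range, not_lt] at hj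
      omega
    rw [tailChain_eq_zero j _ hj', mul_zero]

/-- T(v) = Σⱼ tailChainⱼ(v) equals tW(v). -/
lemma Tsum : ∀ (n : ℕ) (v : Word), v.length ≤ n →
    ∑ j ∈ Finset.range (v.length + 1), tailChain lamUbW j v = tW v := by
  intro n
  induction n with
  | zero =>
    intro v hv
    have : v = [] := List.length_eq_zero_iff.mp (Nat.le_zero.mp hv)
    subst this
    simp [tW_nil, tailChain, lamUbW_nil]
  | succ n IH =>
    intro v hv
    rcases List.eq_nil_or_concat' v with rfl | ⟨l, x, rfl⟩
    · simp [tW_nil, tailChain, lamUbW_nil]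
    · rw [Finset.sum_range_succ']
      have h0 : tailChain lamUbW 0 (l ++ [x]) = lamUbW (l ++ [x]) := rfl
      have hstep : ∀ j, tailChain lamUbW (j + 1) (l ++ [x])
          = conv etaW (tailChain lamUbW j) (l ++ [x]) := fun j => rfl
      simp only [hstep, h0]
      rw [sum_conv]
      have hIH : ∀ i ∈ Finset.range (l ++ [x]).length,
          etaW ((l ++ [x]).take i) * genB *
            ∑ j ∈ Finset.range (((l ++ [x]).drop (i + 1)).length + 1),
              tailChain lamUbW j ((l ++ [x]).drop (i + 1))
          = etaW ((l ++ [x]).take i) * genB * tW ((l ++ [x]).drop (i + 1)) := by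
        intro i hi
        rw [IH _ (by simp only [List.length_drop]; simp at hv ⊢; omega)]
      rw [Finset.sum_congr rfl hIH]
      -- now:  (∑ᵢ η(take i)·b·tW(drop (i+1))) + lamUbW (l ++ [x]) = tW (l ++ [x])
      have hlen : (l ++ [x]).length = l.length + 1 := by simp
      cases x with
      | true =>
        rw [lamUbW_concat_true, tW_concat_true, add_zero]
        refine Finset.sum_eq_zero fun i hi => ?_
        have hi' : i < l.length + 1 := by rw [← hlen]; exact Finset.mem_range.mp hi
        rcases Nat.lt_or_ge i l.length with h | h
        · rw [List.drop_append_of_le_length (by omega), tW_concat_true, mul_zero]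
        · have : i = l.length := by omega
          subst this
          rw [List.drop_eq_nil_of_le (by simp), tW_nil, mul_zero]
      | false =>
        rw [lamUbW_concat_false, tW_concat_false]
        have hsum : ∑ i ∈ Finset.range (l ++ [false]).length,
            etaW ((l ++ [false]).take i) * genB * tW ((l ++ [false]).drop (i + 1))
            = (2 : ℤ) • (conv etaW omegaW l * amb) := by
          rw [hlen, Finset.sum_range_succ]
          rw [List.drop_eq_nil_of_le (by simp), tW_nil, mul_zero, add_zero]
          rw [conv, Finset.sum_mul, Finset.smul_sum]
          refine Finset.sum_congr rfl fun i hi => ?_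
          have hi' : i < l.length := Finset.mem_range.mp hi
          rw [List.take_append_of_le_length (by omega),
            List.drop_append_of_le_length (by omega), tW_concat_false]
          rw [mul_smul_comm, mul_assoc, mul_assoc, mul_assoc]
        rw [hsum]
        have hconv : conv etaW omegaW l = omegaW l - chiW l := by rw [omega_eq l]; abel
        rw [hconv, sub_mul, smul_sub]
        abel

lemma phiUbK_two (k : ℕ) (v : Word) :
    phiUbK (k + 2) v = conv kappaW (tailChain lamUbW k) v := rfl

lemma kappa_eq_chi_pre (t : Word) (h : t = [] ∨ ∃ t', t = false :: t') :
    (2 : ℤ) • kappaW t = etaW t := by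
  rcases h with rfl | ⟨t', rfl⟩
  · simp [kappaW, etaW]
  · rw [kappaW, etaW]
    have hc : List.IsChain (· ≥ ·) (false :: t') ↔ ∀ x ∈ false :: t', x = false := by
      rw [chain'_cons_false]; simp
    by_cases hall : ∀ x ∈ (false :: t' : Word), x = false
    · rw [if_pos hall, if_pos (hc.mpr hall)]
    · rw [if_neg hall, smul_zero, if_neg (fun h' => hall (hc.mp h'))]

lemma kappaW_cons_false_concat (l : Word) :
    kappaW ((false :: l) ++ [false]) = chiW (false :: l) * amb := by
  rw [kappaW, chiW]
  have hc : List.IsChain (· ≥ ·) (false :: l) ↔ ∀ x ∈ (false :: l) ++ [false], x = false := by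
    rw [chain'_cons_false]; simp
  by_cases hall : ∀ x ∈ (false :: l) ++ [false], x = false
  · rw [if_pos hall, if_pos (hc.mpr hall), List.length_append, List.length_singleton, pow_succ]
  · rw [if_neg hall, if_neg (fun h' => hall (hc.mp h')), zero_mul]

lemma mon_mul (u v : Word) : mon u * mon v = mon (u ++ v) := by
  rw [mon, mon, mon, MonoidAlgebra.single_mul_single, one_mul, ← FreeMonoid.ofList_append]

lemma lin_mon (f : Word → ZAB) (u : Word) : lin f (mon u) = f u := by
  rw [lin, mon, MonoidAlgebra.single]
  erw [Finsupp.lift_apply]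
  change (Finsupp.single (FreeMonoid.ofList u) (1 : ℤ)).sum (fun x r => r • f (FreeMonoid.toList x)) = f u
  rw [Finsupp.sum_single_index (by simp), one_smul, FreeMonoid.toList_ofList]


/-- for every ab-monomial `w` of length at least 1,
`φ_ub(a·w) = ω(a·r(w))·(a-b)`. -/
theorem phiUb_aw (w : Word) (hw : w ≠ []) :
    phiUbW (false :: w) = lin omegaW (genA * rW w) * amb := by
  -- Step 1: reduce the LHS to kappaW v + conv kappaW tW v
  have hmain : phiUbW (false :: w) = kappaW (false :: w) + conv kappaW tW (false :: w) := by
    rw [phiUbW]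
    simp only [List.length_cons]
    rw [Finset.sum_range_succ', Finset.sum_range_succ']
    have h0 : phiUbK 0 (false :: w) = 0 := rfl
    have h1 : phiUbK 1 (false :: w) = kappaW (false :: w) := rfl
    simp only [phiUbK_two, h0, h1, add_zero]
    have hlen : w.length + 1 = (false :: w).length := by simp
    rw [show (∑ i ∈ Finset.range (w.length + 1),
          conv kappaW (tailChain lamUbW i) (false :: w))
        = ∑ j ∈ Finset.range (false :: w).length,
          conv kappaW (tailChain lamUbW j) (false :: w) by rw [← hlen]]
    rw [sum_conv]
    have hIH : ∀ i ∈ Finset.range (false :: w).length,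
        kappaW ((false :: w).take i) * genB *
          ∑ j ∈ Finset.range (((false :: w).drop (i + 1)).length + 1),
            tailChain lamUbW j ((false :: w).drop (i + 1))
        = kappaW ((false :: w).take i) * genB * tW ((false :: w).drop (i + 1)) := by
      intro i hi
      rw [Tsum ((false :: w).drop (i + 1)).length _ le_rfl]
    rw [Finset.sum_congr rfl hIH, add_comm, ← conv]
  rw [hmain]
  rcases List.eq_nil_or_concat' w with rfl | ⟨l, x, rfl⟩
  · exact absurd rfl hw
  cases x with
  | true =>
    -- RHS is zero
    have hr : rW (l ++ [true]) = 0 := by simp [rW]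
    rw [hr, mul_zero, map_zero, zero_mul]
    have hk : kappaW (false :: (l ++ [true])) = 0 := by
      rw [kappaW, if_neg]
      intro h
      simpa using h true (by simp)
    rw [hk, zero_add, conv]
    refine Finset.sum_eq_zero fun i hi => ?_
    have hi' : i < l.length + 2 := by have := Finset.mem_range.mp hi; simp at this; omega
    have hdrop : (false :: (l ++ [true])).drop (i + 1) = (l ++ [true]).drop i := rfl
    rw [hdrop]
    rcases Nat.lt_or_ge i (l.length + 1) with h | h
    · rcases Nat.lt_or_ge i l.length with h2 | h2
      · rw [List.drop_append_of_le_length (by omega), tW_concat_true, mul_zero]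
      · have : i = l.length := by omega
        subst this
        rw [List.drop_append_of_le_length le_rfl, List.drop_length, List.nil_append]
        have : tW [true] = 0 := by
          have := tW_concat_true ([] : Word)
          simpa using this
        rw [this, mul_zero]
    · have : i = l.length + 1 := by omega
      subst this
      rw [List.drop_eq_nil_of_le (by simp), tW_nil, mul_zero]
  | false =>
    -- RHS: lin omegaW (genA * rW (l ++ [false])) = omegaW (false :: l)
    have hr : rW (l ++ [false]) = mon l := by simp [rW]
    have hA : genA = mon [false] := rfl
    rw [hr, hA, mon_mul, List.singleton_append, lin_mon]
    -- LHS
    have hcons : false :: (l ++ [false]) = (false :: l) ++ [false] := rfl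
    rw [hcons, kappaW_cons_false_concat]
    have hconv : conv kappaW tW ((false :: l) ++ [false])
        = conv etaW omegaW (false :: l) * amb := by
      rw [conv, conv]
      have hlen2 : ((false :: l) ++ [false]).length = (false :: l).length + 1 := by simp
      rw [hlen2, Finset.sum_range_succ]
      rw [List.drop_eq_nil_of_le (by simp), tW_nil, mul_zero, add_zero]
      rw [Finset.sum_mul]
      refine Finset.sum_congr rfl fun i hi => ?_
      have hi' : i < (false :: l).length := Finset.mem_range.mp hi
      rw [List.take_append_of_le_length (by omega),
        List.drop_append_of_le_length (by omega), tW_concat_false]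
      rw [← kappa_eq_chi_pre _ (take_cons_shape false l i)]
      simp only [mul_smul_comm, smul_mul_assoc, mul_assoc]
    rw [hconv]
    have h2 : conv etaW omegaW (false :: l) = omegaW (false :: l) - chiW (false :: l) := by
      rw [omega_eq (false :: l)]; abel
    rw [h2, sub_mul]
    abel



end CD

end
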